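/- For the van der Corput sequence in base 2, the limit lim_{N→∞} F_N(s) of the finite empiric pair correlation function exists if and only if 0 ≤ s ≤ 1/2, and in that case the limit equals 0. In particular, the van der Corput sequence in base 2 does not have Poissonian pair correlations. -/

import Mathlib

open scoped Classical
open Finset Filter

noncomputable def g2 (n : ℕ) : ℝ :=
  ∑ j ∈ Finset.range (n + 1), (if n.testBit j then ((2 : ℝ) ^ (j + 1))⁻¹ else 0)

noncomputable def vdc (i : ℕ) : ℝ := g2 (i - 1)

noncomputable def nint (x : ℝ) : ℝ := |x - round x|

noncomputable def F (N : ℕ) (s : ℝ) : ℝ :=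
  (((Finset.Icc 1 N ×ˢ Finset.Icc 1 N).filter
      (fun p => p.1 ≠ p.2 ∧ nint (vdc p.1 - vdc p.2) ≤ s / N)).card : ℝ) / N

lemma nint_neg (x : ℝ) : nint (-x) = nint x := by
  unfold nint
  rw [abs_sub_round_eq_min, abs_sub_round_eq_min]
  rcases eq_or_ne (Int.fract x) 0 with h | h
  · rw [Int.fract_neg_eq_zero.2 h, h]
  · rw [Int.fract_neg h]
    simp [min_comm]

lemma nint_add_int (x : ℝ) (z : ℤ) : nint (x + z) = nint x := by
  unfold nint
  rw [round_add_intCast]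
  push_cast
  ring_nf

lemma nint_le_of_int {x ε : ℝ} (z : ℤ) (h : |x - z| ≤ ε) : nint x ≤ ε :=
  (round_le x z).trans h

lemma nint_div_nat {d P : ℕ} (h : d < P) :
    nint ((d : ℝ) / P) = (min d (P - d) : ℕ) / P := by
  unfold nint
  rw [abs_sub_round_div_natCast_eq, Nat.mod_eq_of_lt h]

def rev (m n : ℕ) : ℕ := ∑ j ∈ Finset.range m, if n.testBit j then 2^(m-1-j) else 0

lemma geom2 (m : ℕ) : ∑ j ∈ Finset.range m, 2^j = 2^m - 1 := by
  induction m with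
  | zero => simp
  | succ k ih => rw [Finset.sum_range_succ, ih]; have := Nat.one_le_two_pow (n := k); omega

lemma rev_lt (m n : ℕ) : rev m n < 2^m := by
  have h1 : rev m n ≤ ∑ j ∈ Finset.range m, 2^(m-1-j) := by
    apply Finset.sum_le_sum
    intro j hj
    split <;> simp
  have h2 : ∑ j ∈ Finset.range m, 2^(m-1-j) = ∑ j ∈ Finset.range m, 2^j :=
    Finset.sum_range_reflect (fun j => 2^j) m
  have h3 := geom2 m
  have := Nat.one_le_two_pow (n := m)
  omega

lemma rev_mod (m n : ℕ) : rev m (n % 2^m) = rev m n := by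
  unfold rev
  apply Finset.sum_congr rfl
  intro j hj
  rw [Nat.testBit_mod_two_pow]
  simp [Finset.mem_range.1 hj]

lemma rev_recA (m n : ℕ) : rev (m+1) n = (if n.testBit 0 then 2^m else 0) + rev m (n/2) := by
  have hs : (∑ i ∈ Finset.range m, if n.testBit (i+1) then 2^(m+1-1-(i+1)) else 0)
      = rev m (n/2) := by
    apply Finset.sum_congr rfl
    intro i hi
    rw [Nat.testBit_add_one]
    simp only [show m+1-1-(i+1) = m-1-i from by omega]
  show (∑ j ∈ Finset.range (m+1), if n.testBit j then 2^(m+1-1-j) else 0) = _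
  rw [Finset.sum_range_succ', hs, add_comm]
  norm_num

lemma rev_recB (m n : ℕ) : rev (m+1) n = (if n.testBit m then 1 else 0) + 2 * rev m n := by
  have hs : (∑ i ∈ Finset.range m, if n.testBit i then 2^(m+1-1-i) else 0)
      = 2 * rev m n := by
    simp only [rev, Finset.mul_sum]
    apply Finset.sum_congr rfl
    intro i hi
    rw [Finset.mem_range] at hi
    simp only [show m+1-1-i = (m-1-i)+1 from by omega, pow_succ]
    split <;> ring
  show (∑ j ∈ Finset.range (m+1), if n.testBit j then 2^(m+1-1-j) else 0) = _
  rw [Finset.sum_range_succ, hs, add_comm]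
  norm_num

lemma rev_invol : ∀ m, ∀ n, n < 2^m → rev m (rev m n) = n := by
  intro m
  induction m with
  | zero => intro n hn; interval_cases n; simp [rev]
  | succ m ih =>
    intro n hn
    have hr : rev m (n/2) < 2^m := rev_lt m (n/2)
    have hbit := Nat.testBit_zero n
    have hA : rev (m+1) n = (if n.testBit 0 then 2^m else 0) + rev m (n/2) := rev_recA m n
    rw [rev_recB]
    rcases Bool.eq_false_or_eq_true (n.testBit 0) with hb | hb
    · rw [if_pos hb] at hA
      rw [hA]
      have ht : (2^m + rev m (n/2)).testBit m = true := by
        rw [Nat.testBit_two_pow_add_eq]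
        simp [Nat.testBit_lt_two_pow hr]
      rw [ht, if_pos rfl]
      have hmod : rev m (2^m + rev m (n/2)) = rev m (rev m (n/2)) := by
        rw [← rev_mod m (2^m + rev m (n/2)), Nat.add_mod_left, Nat.mod_eq_of_lt hr]
      rw [hmod, ih _ (by omega)]
      simp [hb] at hbit
      omega
    · rw [if_neg (by simp [hb]), zero_add] at hA
      rw [hA]
      have ht : (rev m (n/2)).testBit m = false := Nat.testBit_lt_two_pow hr
      rw [ht, if_neg (by simp), zero_add, ih _ (by omega)]
      simp [hb] at hbit
      omega

lemma rev_inj {m a b : ℕ} (ha : a < 2^m) (hb : b < 2^m) (h : rev m a = rev m b) : a = b := by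
  rw [← rev_invol m a ha, ← rev_invol m b hb, h]

lemma rev_image (m : ℕ) : (Finset.range (2^m)).image (rev m) = Finset.range (2^m) := by
  apply Finset.eq_of_subset_of_card_le
  · intro x hx
    simp only [Finset.mem_image] at hx
    obtain ⟨a, _, rfl⟩ := hx
    exact Finset.mem_range.2 (rev_lt m a)
  · rw [Finset.card_image_of_injOn]
    intro a ha b hb h
    exact rev_inj (Finset.mem_range.1 ha) (Finset.mem_range.1 hb) h

lemma rev_surj {m b : ℕ} (hb : b < 2^m) : ∃ a < 2^m, rev m a = b :=
  ⟨rev m b, rev_lt m b, rev_invol m b hb⟩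
lemma g2_eq_sum (m n : ℕ) (h : n < 2^m) :
    g2 n = ∑ j ∈ Finset.range m, if n.testBit j then ((2:ℝ)^(j+1))⁻¹ else 0 := by
  have key : ∀ K, n + 1 ≤ K → m ≤ K →
      (∑ j ∈ Finset.range K, if n.testBit j then ((2:ℝ)^(j+1))⁻¹ else 0)
      = ∑ j ∈ Finset.range m, if n.testBit j then ((2:ℝ)^(j+1))⁻¹ else 0 := by
    intro K hK1 hK2
    symm
    apply Finset.sum_subset (Finset.range_subset_range.2 hK2)
    intro j hj hj2
    rw [Finset.mem_range] at hj hj2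
    have : n < 2^j := lt_of_lt_of_le h (Nat.pow_le_pow_right (by norm_num) (by omega))
    rw [Nat.testBit_lt_two_pow this]
    simp
  have e1 : g2 n = ∑ j ∈ Finset.range (max (n+1) m), if n.testBit j then ((2:ℝ)^(j+1))⁻¹ else 0 := by
    unfold g2
    apply Finset.sum_subset (Finset.range_subset_range.2 (le_max_left _ _))
    intro j hj hj2
    rw [Finset.mem_range] at hj hj2
    have : n < 2^j := lt_of_lt_of_le (Nat.lt_two_pow_self (n := n)) (Nat.pow_le_pow_right (by norm_num) (by omega))
    rw [Nat.testBit_lt_two_pow this]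
    simp
  rw [e1, key _ (le_max_left _ _) (le_max_right _ _)]

lemma g2_val {m n : ℕ} (h : n < 2^m) : g2 n = (rev m n : ℝ) / 2^m := by
  rw [g2_eq_sum m n h, rev]
  push_cast
  rw [Finset.sum_div]
  apply Finset.sum_congr rfl
  intro j hj
  rw [Finset.mem_range] at hj
  have h2 : ((2:ℝ))^(m-1-j) * 2^(j+1) = 2^m := by rw [← pow_add]; congr 1; omega
  split
  · rw [inv_eq_one_div, div_eq_div_iff (by positivity) (by positivity), one_mul]
    exact h2.symm
  · simp

lemma g2_add_pow {m r : ℕ} (h : r < 2^m) : g2 (2^m + r) = g2 r + ((2:ℝ)^(m+1))⁻¹ := by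
  have h1 : 2^m + r < 2^(m+1) := by rw [pow_succ]; omega
  have h2 : r < 2^(m+1) := by rw [pow_succ]; omega
  rw [g2_eq_sum (m+1) _ h1, g2_eq_sum (m+1) r h2, Finset.sum_range_succ, Finset.sum_range_succ]
  have hbm : (2^m + r).testBit m = true := by
    rw [Nat.testBit_two_pow_add_eq]
    simp [Nat.testBit_lt_two_pow h]
  have hbr : r.testBit m = false := Nat.testBit_lt_two_pow h
  rw [hbm, hbr, if_pos rfl, if_neg (by simp), add_zero]
  congr 1
  apply Finset.sum_congr rfl
  intro j hj
  rw [Nat.testBit_two_pow_add_gt (Finset.mem_range.1 hj)]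
lemma mod_add_inj {P t a b : ℕ} (ha : a < P) (hb : b < P) (h : (a + t) % P = (b + t) % P) :
    a = b := by
  have h1 : a + t ≡ b + t [MOD P] := h
  have h2 := Nat.ModEq.add_right_cancel' t h1
  rwa [Nat.ModEq, Nat.mod_eq_of_lt ha, Nat.mod_eq_of_lt hb] at h2

lemma nint_shift {P a b : ℕ} (hP : 0 < P) (hb : b ≤ P) :
    nint ((a:ℝ)/P - (b:ℝ)/P) = nint ((((a + P - b) % P : ℕ) : ℝ)/P) := by
  set d := (a + P - b) % P with hd
  set q := (a + P - b) / P with hq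
  have hdm : P * q + d = a + P - b := Nat.div_add_mod (a + P - b) P
  have hba : b ≤ a + P := by omega
  have h2 : ((P * q + d : ℕ) : ℝ) = ((a + P - b : ℕ):ℝ) := by rw [hdm]
  rw [Nat.cast_sub hba] at h2
  push_cast at h2
  have hPne : (P:ℝ) ≠ 0 := by positivity
  have h3 : (a:ℝ)/P - (b:ℝ)/P = (d:ℝ)/P + (((q:ℤ) - 1 : ℤ) : ℝ) := by
    push_cast
    field_simp
    linarith [h2]
  rw [h3, nint_add_int]

lemma nint_cond_of {P D d : ℕ} (hd : d < P) {ε : ℝ} (hhi : ε < ((D:ℝ)+1)/(P:ℝ))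
    (h : nint ((d:ℝ)/P) ≤ ε) : d ≤ D ∨ P - d ≤ D := by
  have hP : 0 < P := by omega
  have hPpos : (0:ℝ) < P := by positivity
  rw [nint_div_nat hd] at h
  have h1 : ((min d (P-d) : ℕ):ℝ)/P < ((D:ℝ)+1)/P := lt_of_le_of_lt h hhi
  rw [div_lt_div_iff₀ hPpos hPpos] at h1
  have h2 : ((min d (P-d) : ℕ):ℝ) < (D:ℝ)+1 := lt_of_mul_lt_mul_right h1 hPpos.le
  have h3 : min d (P-d) < D + 1 := by exact_mod_cast h2
  omega

lemma nint_cond_to {P D d : ℕ} (hd : d < P) {ε : ℝ} (hlo : (D:ℝ)/(P:ℝ) ≤ ε)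
    (h : d ≤ D ∨ P - d ≤ D) : nint ((d:ℝ)/P) ≤ ε := by
  have hP : 0 < P := by omega
  have hPpos : (0:ℝ) < P := by positivity
  rw [nint_div_nat hd]
  have h3 : min d (P-d) ≤ D := by omega
  have h4 : ((min d (P-d) : ℕ):ℝ) ≤ (D:ℝ) := Nat.cast_le.2 h3
  calc ((min d (P-d) : ℕ):ℝ)/P ≤ (D:ℝ)/P := by gcongr
    _ ≤ ε := hlo

lemma vdc_grid (m : ℕ) {k : ℕ} (h1 : 1 ≤ k) (h2 : k ≤ 2^m) :
    vdc k = ((rev m (k-1) : ℝ))/((2^m : ℕ) : ℝ) := by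
  have : k - 1 < 2^m := by omega
  show g2 (k-1) = _
  rw [g2_val this]
  norm_num

lemma count_grid (m D : ℕ) (ε : ℝ) (h2D : 2*D < 2^m)
    (hlo : (D:ℝ)/2^m ≤ ε) (hhi : ε < ((D:ℝ)+1)/2^m) :
    ((Finset.Icc 1 (2^m) ×ˢ Finset.Icc 1 (2^m)).filter
      (fun p => p.1 ≠ p.2 ∧ nint (vdc p.1 - vdc p.2) ≤ ε)).card = 2*D*2^m := by
  have hP : 0 < 2^m := Nat.two_pow_pos m
  have hcast : ((2:ℝ))^m = (((2^m : ℕ)):ℝ) := by push_cast; ring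
  rw [hcast] at hlo hhi
  have hPpos : (0:ℝ) < (((2^m:ℕ)):ℝ) := by positivity
  -- Step 1 : relabel via rev
  have step1 : ((Finset.Icc 1 (2^m) ×ˢ Finset.Icc 1 (2^m)).filter
      (fun p => p.1 ≠ p.2 ∧ nint (vdc p.1 - vdc p.2) ≤ ε)).card
      = ((Finset.range (2^m) ×ˢ Finset.range (2^m)).filter
      (fun q => q.1 ≠ q.2 ∧ nint ((q.1:ℝ)/((2^m:ℕ):ℝ) - (q.2:ℝ)/((2^m:ℕ):ℝ)) ≤ ε)).card := by
    apply Finset.card_nbij' (fun p => (rev m (p.1 - 1), rev m (p.2 - 1)))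
      (fun q => (rev m q.1 + 1, rev m q.2 + 1))
    · intro p hp
      simp only [Finset.mem_coe, Finset.mem_filter, Finset.mem_product, Finset.mem_Icc, Finset.mem_range] at hp ⊢
      obtain ⟨⟨⟨h11, h12⟩, h21, h22⟩, hne, hcond⟩ := hp
      refine ⟨⟨rev_lt _ _, rev_lt _ _⟩, ?_, ?_⟩
      · intro hcon
        have := rev_inj (m := m) (show p.1 - 1 < 2^m by omega) (show p.2 - 1 < 2^m by omega) hcon
        omega
      · rw [vdc_grid m h11 h12, vdc_grid m h21 h22] at hcond
        exact_mod_cast hcond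
    · intro q hq
      simp only [Finset.mem_coe, Finset.mem_filter, Finset.mem_product, Finset.mem_Icc, Finset.mem_range] at hq ⊢
      obtain ⟨⟨h1, h2⟩, hne, hcond⟩ := hq
      have l1 : rev m q.1 < 2^m := rev_lt m q.1
      have l2 : rev m q.2 < 2^m := rev_lt m q.2
      have e1 : rev m (rev m q.1) = q.1 := rev_invol m q.1 h1
      have e2 : rev m (rev m q.2) = q.2 := rev_invol m q.2 h2
      refine ⟨⟨⟨by omega, by omega⟩, by omega, by omega⟩, ?_, ?_⟩
      · intro hcon
        apply hne
        rw [← e1, ← e2]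
        have : rev m q.1 = rev m q.2 := by omega
        rw [this]
      · rw [vdc_grid m (by omega) (by omega : rev m q.1 + 1 ≤ 2^m),
            vdc_grid m (by omega) (by omega : rev m q.2 + 1 ≤ 2^m)]
        have r1 : rev m q.1 + 1 - 1 = rev m q.1 := by omega
        have r2 : rev m q.2 + 1 - 1 = rev m q.2 := by omega
        rw [r1, r2, e1, e2]
        exact_mod_cast hcond
    · intro p hp
      simp only [Finset.mem_coe, Finset.mem_filter, Finset.mem_product, Finset.mem_Icc] at hp
      obtain ⟨⟨⟨h11, h12⟩, h21, h22⟩, _⟩ := hp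
      have e1 : rev m (rev m (p.1 - 1)) = p.1 - 1 := rev_invol m _ (by omega)
      have e2 : rev m (rev m (p.2 - 1)) = p.2 - 1 := rev_invol m _ (by omega)
      ext
      · dsimp only
        omega
      · dsimp only
        omega
    · intro q hq
      simp only [Finset.mem_coe, Finset.mem_filter, Finset.mem_product, Finset.mem_range] at hq
      obtain ⟨⟨h1, h2⟩, _⟩ := hq
      have e1 : rev m (rev m q.1) = q.1 := rev_invol m q.1 h1
      have e2 : rev m (rev m q.2) = q.2 := rev_invol m q.2 h2
      ext
      · dsimp only
        rw [Nat.add_sub_cancel, e1]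
      · dsimp only
        rw [Nat.add_sub_cancel, e2]
  rw [step1]
  -- Step 2 : to offset representation
  have memD : ∀ d, d ∈ (Finset.Icc 1 D ∪ Finset.Icc (2^m-D) (2^m-1)) ↔
      ((1 ≤ d ∧ d ≤ D) ∨ (2^m - D ≤ d ∧ d ≤ 2^m - 1)) := by
    intro d; simp [Finset.mem_union, Finset.mem_Icc]
  have step2 : ((Finset.range (2^m) ×ˢ Finset.range (2^m)).filter
      (fun q => q.1 ≠ q.2 ∧ nint ((q.1:ℝ)/((2^m:ℕ):ℝ) - (q.2:ℝ)/((2^m:ℕ):ℝ)) ≤ ε)).card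
      = (Finset.range (2^m) ×ˢ (Finset.Icc 1 D ∪ Finset.Icc (2^m-D) (2^m-1))).card := by
    apply Finset.card_nbij' (fun q => (q.2, (q.1 + 2^m - q.2) % 2^m))
      (fun r => ((r.2 + r.1) % 2^m, r.1))
    · intro q hq
      simp only [Finset.mem_coe, Finset.mem_filter, Finset.mem_product, Finset.mem_range] at hq
      obtain ⟨⟨h1, h2⟩, hne, hcond⟩ := hq
      have hdlt : (q.1 + 2^m - q.2) % 2^m < 2^m := Nat.mod_lt _ hP
      have hne0 : (q.1 + 2^m - q.2) % 2^m ≠ 0 := by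
        intro hcon
        obtain ⟨c, hc⟩ := Nat.dvd_of_mod_eq_zero hcon
        have hc2 : c < 2 := by
          by_contra hcc
          push_neg at hcc
          have : 2^m * 2 ≤ 2^m * c := Nat.mul_le_mul_left _ hcc
          omega
        interval_cases c <;> omega
      rw [nint_shift hP (by omega : q.2 ≤ 2^m)] at hcond
      have hcases := nint_cond_of hdlt hhi hcond
      simp only [Finset.mem_coe, Finset.mem_product, Finset.mem_range]
      exact ⟨h2, (memD _).2 (by omega)⟩
    · intro r hr
      simp only [Finset.mem_coe, Finset.mem_product, Finset.mem_range] at hr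
      obtain ⟨hb, hd⟩ := hr
      rw [memD] at hd
      have hd2 : 1 ≤ r.2 ∧ r.2 ≤ 2^m - 1 := by omega
      have ha : (r.2 + r.1) % 2^m < 2^m := Nat.mod_lt _ hP
      have hkey : ((r.2 + r.1) % 2^m + 2^m - r.1) % 2^m = r.2 := by
        have h2 : (r.2 + r.1) % 2^m + 2^m - r.1 = (r.2 + r.1) % 2^m + (2^m - r.1) := by omega
        rw [h2, Nat.mod_add_mod]
        have h3 : r.2 + r.1 + (2^m - r.1) = r.2 + 2^m := by omega
        rw [h3, Nat.add_mod_right, Nat.mod_eq_of_lt (by omega)]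
      simp only [Finset.mem_coe, Finset.mem_filter, Finset.mem_product, Finset.mem_range]
      refine ⟨⟨ha, hb⟩, ?_, ?_⟩
      · intro hcon
        have h0 : (0 + r.1) % 2^m = r.1 := by rw [Nat.zero_add, Nat.mod_eq_of_lt hb]
        have : r.2 = 0 := mod_add_inj (by omega) hP (by rw [h0]; exact hcon)
        omega
      · rw [nint_shift hP (by omega : r.1 ≤ 2^m), hkey]
        exact nint_cond_to (by omega) hlo (by omega)
    · intro q hq
      simp only [Finset.mem_coe, Finset.mem_filter, Finset.mem_product, Finset.mem_range] at hq
      obtain ⟨⟨h1, h2⟩, hne, _⟩ := hq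
      have hkey : ((q.1 + 2^m - q.2) % 2^m + q.2) % 2^m = q.1 := by
        rw [Nat.mod_add_mod]
        have h3 : q.1 + 2^m - q.2 + q.2 = q.1 + 2^m := by omega
        rw [h3, Nat.add_mod_right, Nat.mod_eq_of_lt h1]
      ext
      · dsimp only
        rw [hkey]
      · dsimp only
    · intro r hr
      simp only [Finset.mem_coe, Finset.mem_product, Finset.mem_range] at hr
      obtain ⟨hb, hd⟩ := hr
      rw [memD] at hd
      have hkey : ((r.2 + r.1) % 2^m + 2^m - r.1) % 2^m = r.2 := by
        have h2 : (r.2 + r.1) % 2^m + 2^m - r.1 = (r.2 + r.1) % 2^m + (2^m - r.1) := by omega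
        rw [h2, Nat.mod_add_mod]
        have h3 : r.2 + r.1 + (2^m - r.1) = r.2 + 2^m := by omega
        rw [h3, Nat.add_mod_right, Nat.mod_eq_of_lt (by omega)]
      ext
      · dsimp only
      · dsimp only
        rw [hkey]
  rw [step2, Finset.card_product, Finset.card_range]
  have hdisj : Disjoint (Finset.Icc 1 D) (Finset.Icc (2^m-D) (2^m-1)) := by
    rw [Finset.disjoint_left]
    intro a ha hb2
    rw [Finset.mem_Icc] at ha hb2
    omega
  rw [Finset.card_union_of_disjoint hdisj, Nat.card_Icc, Nat.card_Icc]
  have hc : D + 1 - 1 + (2^m - 1 + 1 - (2^m - D)) = 2*D := by omega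
  rw [hc]
  ring
lemma mod_diff_ne_zero {P a b : ℕ} (hP : 0 < P) (ha : a < P) (hb : b < P) (hne : a ≠ b) :
    (a + P - b) % P ≠ 0 := by
  intro hcon
  obtain ⟨c, hc⟩ := Nat.dvd_of_mod_eq_zero hcon
  have hc2 : c < 2 := by
    by_contra hcc
    push_neg at hcc
    have : P * 2 ≤ P * c := Nat.mul_le_mul_left _ hcc
    omega
  interval_cases c <;> omega

lemma exists_pow (N : ℕ) (hN : 1 ≤ N) : ∃ m, N ≤ 2^m ∧ 2^m < 2*N := by
  rcases eq_or_lt_of_le hN with rfl | hN2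
  · exact ⟨0, by norm_num⟩
  have h1 : 1 ≤ N - 1 := by omega
  refine ⟨(N-1).size, ?_, ?_⟩
  · have := Nat.lt_size_self (N-1)
    omega
  · have hs : 0 < (N-1).size := Nat.size_pos.2 (by omega)
    have := (Nat.lt_size (m := (N-1).size - 1) (n := N-1)).1 (by omega)
    have h2 : 2^((N-1).size - 1 + 1) = 2 * 2^((N-1).size - 1) := by ring
    have h3 : (N-1).size - 1 + 1 = (N-1).size := by omega
    rw [← h3, h2]
    omega

lemma nint_sub_comm (x y : ℝ) : nint (x - y) = nint (y - x) := by
  rw [← nint_neg (y - x), neg_sub]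

lemma F_zero (N : ℕ) {s : ℝ} (h0 : 0 ≤ s) (h : s ≤ 1/2) : F N s = 0 := by
  unfold F
  rcases Nat.eq_zero_or_pos N with rfl | hN
  · simp
  suffices hemp : ((Finset.Icc 1 N ×ˢ Finset.Icc 1 N).filter
      (fun p => p.1 ≠ p.2 ∧ nint (vdc p.1 - vdc p.2) ≤ s / N)).card = 0 by
    rw [hemp]; simp
  rw [Finset.card_eq_zero, Finset.filter_eq_empty_iff]
  intro p hp
  rintro ⟨hne, hcond⟩
  obtain ⟨m, hm1, hm2⟩ := exists_pow N hN
  simp only [Finset.mem_product, Finset.mem_Icc] at hp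
  obtain ⟨⟨h11, h12⟩, h21, h22⟩ := hp
  rw [vdc_grid m h11 (by omega), vdc_grid m h21 (by omega)] at hcond
  have ha : rev m (p.1-1) < 2^m := rev_lt _ _
  have hb : rev m (p.2-1) < 2^m := rev_lt _ _
  have hne' : rev m (p.1-1) ≠ rev m (p.2-1) := by
    intro hcon
    have := rev_inj (show p.1-1 < 2^m by omega) (show p.2-1 < 2^m by omega) hcon
    omega
  have hP : 0 < 2^m := Nat.two_pow_pos m
  rw [nint_shift hP (by omega)] at hcond
  set d := (rev m (p.1-1) + 2^m - rev m (p.2-1)) % 2^m with hd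
  have hd0 : d ≠ 0 := mod_diff_ne_zero hP ha hb hne'
  have hdlt : d < 2^m := Nat.mod_lt _ hP
  rw [nint_div_nat hdlt] at hcond
  have hmin : 1 ≤ min d (2^m - d) := by omega
  have hminR : (1:ℝ) ≤ ((min d (2^m - d) : ℕ):ℝ) := by exact_mod_cast hmin
  have hPpos : (0:ℝ) < ((2^m:ℕ):ℝ) := by positivity
  have hNpos : (0:ℝ) < (N:ℝ) := by exact_mod_cast hN
  have h1 : (1:ℝ)/((2^m:ℕ):ℝ) ≤ ((min d (2^m - d) : ℕ):ℝ)/((2^m:ℕ):ℝ) := by gcongr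
  have hlt : ((2^m:ℕ):ℝ) < 2*(N:ℝ) := by exact_mod_cast hm2
  have c1 : s/(N:ℝ) ≤ (1/2)/N := by gcongr
  have c3 : (1:ℝ)/(2*(N:ℝ)) < 1/((2^m:ℕ):ℝ) := by
    apply one_div_lt_one_div_of_lt hPpos hlt
  have c2 : (1/2)/(N:ℝ) = 1/(2*N) := by ring
  linarith

lemma vdc_B {m r : ℕ} (hr : r < 2^m) :
    vdc (2^m + 1 + r) = ((rev m r : ℝ))/((2^m:ℕ):ℝ) + (((2:ℝ))^(m+1))⁻¹ := by
  have h1 : 2^m + 1 + r - 1 = 2^m + r := by omega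
  show g2 (2^m + 1 + r - 1) = _
  rw [h1, g2_add_pow hr, g2_val hr]
  norm_num

lemma count_extra (m M c₀ : ℕ) (ε : ℝ) (hM : M ≤ 2^m) (hc1 : 1 ≤ c₀) (hc2 : 2*c₀ ≤ 2^m)
    (hε : ((2*c₀ - 1 : ℕ):ℝ)/(((2:ℝ))^(m+1)) ≤ ε) :
    M * (2*c₀) ≤ (((Finset.Icc (2^m+1) (2^m+M)) ×ˢ (Finset.Icc 1 (2^m))).filter
      (fun p => p.1 ≠ p.2 ∧ nint (vdc p.1 - vdc p.2) ≤ ε)).card := by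
  have hP : 0 < 2^m := Nat.two_pow_pos m
  have hPpos : (0:ℝ) < ((2^m:ℕ):ℝ) := by positivity
  classical
  have hcard := Finset.card_le_card_of_injOn
    (f := fun (rj : ℕ × ℕ) =>
      (2^m + 1 + rj.1, rev m ((rj.2 + (rev m rj.1 + (2^m - (c₀-1)))) % 2^m) + 1))
    (s := Finset.range M ×ˢ Finset.range (2*c₀))
    (t := ((Finset.Icc (2^m+1) (2^m+M)) ×ˢ (Finset.Icc 1 (2^m))).filter
      (fun p => p.1 ≠ p.2 ∧ nint (vdc p.1 - vdc p.2) ≤ ε))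
    ?_ ?_
  · simpa [Finset.card_product] using hcard
  · -- membership
    intro rj hrj
    simp only [Finset.mem_coe, Finset.mem_product, Finset.mem_range] at hrj
    obtain ⟨hr, hj⟩ := hrj
    dsimp only
    obtain ⟨r, j⟩ := rj
    dsimp only at hr hj ⊢
    set b := (j + (rev m r + (2^m - (c₀-1)))) % 2^m with hbdef
    have hblt : b < 2^m := Nat.mod_lt _ hP
    have hrevb : rev m b < 2^m := rev_lt _ _
    simp only [Finset.mem_coe, Finset.mem_filter, Finset.mem_product, Finset.mem_Icc]
    refine ⟨⟨⟨by omega, by omega⟩, by omega, by omega⟩, by omega, ?_⟩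
    have hrlt : r < 2^m := by omega
    rw [vdc_B hrlt, vdc_grid m (by omega) (by omega : rev m b + 1 ≤ 2^m)]
    have hred : rev m b + 1 - 1 = rev m b := by omega
    rw [hred, rev_invol m b hblt]
    push_cast
    set q := (j + (rev m r + (2^m - (c₀-1)))) / 2^m with hqdef
    have hdm : b + 2^m * q = j + (rev m r + (2^m - (c₀-1))) := Nat.mod_add_div _ _
    have hsub : c₀ - 1 ≤ 2^m := by omega
    have hdmR : (b:ℝ) + ((2:ℝ))^m * q = (j:ℝ) + ((rev m r : ℕ):ℝ) + ((2:ℝ))^m - ((c₀:ℝ) - 1) := by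
      have hcc := congrArg (Nat.cast : ℕ → ℝ) hdm
      push_cast [Nat.cast_sub hsub, Nat.cast_sub hc1] at hcc
      linarith
    apply nint_le_of_int ((q:ℤ) - 1)
    have hb' : (b:ℝ) = (j:ℝ) + ((rev m r : ℕ):ℝ) + ((2:ℝ))^m - (c₀:ℝ) + 1 - ((2:ℝ))^m*(q:ℝ) := by
      linarith
    have hPP : ((2:ℝ))^(m+1) ≠ 0 := by positivity
    have hval : ((rev m r : ℕ):ℝ)/((2:ℝ))^m + (((2:ℝ))^(m+1))⁻¹ - (b:ℝ)/((2:ℝ))^m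
        - (((q:ℤ) - 1 : ℤ):ℝ) = (2*((c₀:ℝ)-1) - 2*(j:ℝ) + 1)/(((2:ℝ))^(m+1)) := by
      rw [hb']
      have h2P : ((2:ℝ))^(m+1) = 2 * ((2:ℝ))^m := by ring
      rw [h2P]
      push_cast
      field_simp
      ring
    rw [hval]
    rw [abs_div, abs_of_pos (by positivity : (0:ℝ) < ((2:ℝ))^(m+1))]
    refine le_trans ?_ hε
    have hj1 : (j:ℝ) ≤ 2*(c₀:ℝ) - 1 := by
      have : (j:ℝ) < 2*(c₀:ℝ) := by exact_mod_cast hj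
      have hjz : (j + 1 : ℕ) ≤ 2*c₀ := hj
      have : ((j+1:ℕ):ℝ) ≤ ((2*c₀:ℕ):ℝ) := Nat.cast_le.2 hjz
      push_cast at this
      linarith
    have hcast : ((2*c₀ - 1 : ℕ):ℝ) = 2*(c₀:ℝ) - 1 := by
      push_cast [Nat.cast_sub (show 1 ≤ 2*c₀ by omega)]
      ring
    rw [hcast]
    gcongr
    rw [abs_le]
    constructor
    · have hc1R : (1:ℝ) ≤ (c₀:ℝ) := by exact_mod_cast hc1
      linarith
    · have hjnn : (0:ℝ) ≤ (j:ℝ) := by positivity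
      linarith
  · -- injectivity
    intro u hu v hv huv
    simp only [Finset.coe_product, Set.mem_prod, Finset.mem_coe, Finset.mem_range] at hu hv
    obtain ⟨hu1, hu2⟩ := hu
    obtain ⟨hv1, hv2⟩ := hv
    have h1 : 2^m + 1 + u.1 = 2^m + 1 + v.1 := congrArg Prod.fst huv
    have hr : u.1 = v.1 := by omega
    have h2 := congrArg Prod.snd huv
    dsimp only at h2
    have hbu : (u.2 + (rev m u.1 + (2^m - (c₀-1)))) % 2^m < 2^m := Nat.mod_lt _ hP
    have hbv : (v.2 + (rev m v.1 + (2^m - (c₀-1)))) % 2^m < 2^m := Nat.mod_lt _ hP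
    have h3 : rev m ((u.2 + (rev m u.1 + (2^m - (c₀-1)))) % 2^m)
        = rev m ((v.2 + (rev m v.1 + (2^m - (c₀-1)))) % 2^m) := by omega
    have h4 := rev_inj hbu hbv h3
    rw [hr] at h4
    have h5 : u.2 = v.2 := mod_add_inj (by omega) (by omega) h4
    exact Prod.ext hr h5
lemma count_swap (A B : Finset ℕ) (ε : ℝ) :
    ((A ×ˢ B).filter (fun p => p.1 ≠ p.2 ∧ nint (vdc p.1 - vdc p.2) ≤ ε)).card
    = ((B ×ˢ A).filter (fun p => p.1 ≠ p.2 ∧ nint (vdc p.1 - vdc p.2) ≤ ε)).card := by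
  apply Finset.card_nbij' Prod.swap Prod.swap
  · intro p hp
    simp only [Finset.mem_coe, Finset.mem_filter, Finset.mem_product] at hp ⊢
    obtain ⟨⟨h1, h2⟩, hne, hcond⟩ := hp
    exact ⟨⟨h2, h1⟩, fun h => hne h.symm, by rwa [nint_sub_comm] at hcond⟩
  · intro p hp
    simp only [Finset.mem_coe, Finset.mem_filter, Finset.mem_product] at hp ⊢
    obtain ⟨⟨h1, h2⟩, hne, hcond⟩ := hp
    exact ⟨⟨h2, h1⟩, fun h => hne h.symm, by rwa [nint_sub_comm] at hcond⟩
  · intro p _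
    simp
  · intro p _
    simp

lemma card_lower (m M c₀ D : ℕ) (ε : ℝ) (hM : M ≤ 2^m) (hc1 : 1 ≤ c₀) (hc2 : 2*c₀ ≤ 2^m)
    (hε : ((2*c₀ - 1 : ℕ):ℝ)/(((2:ℝ))^(m+1)) ≤ ε) (hDA : 2*D < 2^m)
    (hDlo : (D:ℝ)/2^m ≤ ε) (hDhi : ε < ((D:ℝ)+1)/2^m) :
    2*D*2^m + 2*(M*(2*c₀)) ≤ ((Finset.Icc 1 (2^m+M) ×ˢ Finset.Icc 1 (2^m+M)).filter
      (fun p => p.1 ≠ p.2 ∧ nint (vdc p.1 - vdc p.2) ≤ ε)).card := by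
  classical
  set cond : ℕ × ℕ → Prop := fun p => p.1 ≠ p.2 ∧ nint (vdc p.1 - vdc p.2) ≤ ε with hcond
  set SA := (Finset.Icc 1 (2^m) ×ˢ Finset.Icc 1 (2^m)).filter cond with hSA
  set T := (Finset.Icc (2^m+1) (2^m+M) ×ˢ Finset.Icc 1 (2^m)).filter cond with hT
  set T2 := (Finset.Icc 1 (2^m) ×ˢ Finset.Icc (2^m+1) (2^m+M)).filter cond with hT2
  have hSAcard : SA.card = 2*D*2^m := count_grid m D ε hDA hDlo hDhi
  have hTcard : M*(2*c₀) ≤ T.card := count_extra m M c₀ ε hM hc1 hc2 hε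
  have hT2card : T2.card = T.card := count_swap _ _ ε
  have hsub : SA ∪ T ∪ T2 ⊆ (Finset.Icc 1 (2^m+M) ×ˢ Finset.Icc 1 (2^m+M)).filter cond := by
    apply Finset.union_subset
    apply Finset.union_subset
    · exact Finset.filter_subset_filter _ (Finset.product_subset_product
        (Finset.Icc_subset_Icc (le_refl 1) (by omega)) (Finset.Icc_subset_Icc (le_refl 1) (by omega)))
    · exact Finset.filter_subset_filter _ (Finset.product_subset_product
        (Finset.Icc_subset_Icc (by omega) (le_refl _)) (Finset.Icc_subset_Icc (le_refl 1) (by omega)))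
    · exact Finset.filter_subset_filter _ (Finset.product_subset_product
        (Finset.Icc_subset_Icc (le_refl 1) (by omega)) (Finset.Icc_subset_Icc (by omega) (le_refl _)))
  have hd1 : Disjoint SA T := by
    rw [Finset.disjoint_left]
    intro p hp hq
    simp only [hSA, hT, Finset.mem_filter, Finset.mem_product, Finset.mem_Icc] at hp hq
    omega
  have hd2 : Disjoint (SA ∪ T) T2 := by
    rw [Finset.disjoint_left]
    intro p hp hq
    simp only [hSA, hT, hT2, Finset.mem_union, Finset.mem_filter, Finset.mem_product,
      Finset.mem_Icc] at hp hq
    omega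
  calc 2*D*2^m + 2*(M*(2*c₀)) = 2*D*2^m + M*(2*c₀) + M*(2*c₀) := by ring
    _ ≤ SA.card + T.card + T2.card := by omega
    _ = (SA ∪ T ∪ T2).card := by
        rw [Finset.card_union_of_disjoint hd2, Finset.card_union_of_disjoint hd1]
    _ ≤ _ := Finset.card_le_card hsub
lemma rev_zero (m : ℕ) : rev m 0 = 0 := by
  unfold rev
  apply Finset.sum_eq_zero
  intro j _
  simp [Nat.zero_testBit]

lemma vdc_top (m : ℕ) : vdc (2^m + 1) = (((2:ℝ))^(m+1))⁻¹ := by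
  have h := vdc_B (m := m) (r := 0) (Nat.two_pow_pos m)
  rw [show 2^m + 1 + 0 = 2^m + 1 from by omega] at h
  rw [h, rev_zero]
  norm_num

lemma card_U (m D : ℕ) (hD : 1 ≤ D) (hDm : 2*D + 2 ≤ 2^m) {ε : ℝ}
    (hhi : ε < (2*(D:ℝ))/((2:ℝ))^(m+1)) :
    ((Finset.Icc 1 (2^m)).filter (fun l => nint (vdc (2^m+1) - vdc l) ≤ ε)).card ≤ 2*D+1 := by
  classical
  have hP : 0 < 2^m := Nat.two_pow_pos m
  have hP2 : 0 < 2^(m+1) := Nat.two_pow_pos _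
  have hcard := Finset.card_le_card_of_injOn (f := fun l => rev m (l-1))
    (s := (Finset.Icc 1 (2^m)).filter (fun l => nint (vdc (2^m+1) - vdc l) ≤ ε))
    (t := Finset.Icc 0 D ∪ Finset.Icc (2^m+1-D) (2^m-1)) ?_ ?_
  · refine le_trans hcard (le_trans (Finset.card_union_le _ _) ?_)
    rw [Nat.card_Icc, Nat.card_Icc]
    omega
  · intro l hl
    simp only [Finset.mem_coe, Finset.mem_filter, Finset.mem_Icc] at hl
    obtain ⟨⟨hl1, hl2⟩, hcond⟩ := hl
    set b := rev m (l-1) with hb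
    have hblt : b < 2^m := rev_lt _ _
    rw [vdc_top m, vdc_grid m hl1 hl2, ← hb] at hcond
    simp only [Finset.mem_coe, Finset.mem_union, Finset.mem_Icc]
    rcases Nat.eq_zero_or_pos b with hb0 | hb0
    · left; omega
    · -- b ≥ 1
      set d := 2^(m+1) + 1 - 2*b with hd
      have hdlt : d < 2^(m+1) := by omega
      have hx : (((2:ℝ))^(m+1))⁻¹ - (b:ℝ)/((2^m:ℕ):ℝ) = ((d:ℕ):ℝ)/((2^(m+1):ℕ):ℝ) + ((-1 : ℤ):ℝ) := by
        have hbb : (1:ℝ) ≤ (b:ℝ) := by exact_mod_cast hb0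
        have hdd : ((d:ℕ):ℝ) = ((2:ℝ))^(m+1) + 1 - 2*(b:ℝ) := by
          rw [hd]
          push_cast [Nat.cast_sub (show 2*b ≤ 2^(m+1) + 1 by omega)]
          ring
        have hc1 : ((2^m:ℕ):ℝ) = ((2:ℝ))^m := by push_cast; ring
        have hc2 : ((2^(m+1):ℕ):ℝ) = ((2:ℝ))^(m+1) := by push_cast; ring
        rw [hdd, hc1, hc2]
        have e1 : ((2:ℝ))^(m+1) = 2*((2:ℝ))^m := by ring
        push_cast
        field_simp
        ring
      rw [hx, nint_add_int, nint_div_nat hdlt] at hcond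
      have hlt2 : ((min d (2^(m+1) - d) : ℕ):ℝ)/((2^(m+1):ℕ):ℝ) < (2*(D:ℝ))/((2:ℝ))^(m+1) :=
        lt_of_le_of_lt hcond hhi
      have hc2 : ((2^(m+1):ℕ):ℝ) = ((2:ℝ))^(m+1) := by push_cast; ring
      rw [hc2] at hlt2
      have hPpos : (0:ℝ) < ((2:ℝ))^(m+1) := by positivity
      rw [div_lt_div_iff₀ hPpos hPpos] at hlt2
      have hmlt : ((min d (2^(m+1) - d) : ℕ):ℝ) < 2*(D:ℝ) := lt_of_mul_lt_mul_right hlt2 hPpos.le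
      have hmlt2 : min d (2^(m+1) - d) < 2*D := by exact_mod_cast hmlt
      omega
  · intro u hu v hv huv
    simp only [Finset.coe_filter, Set.mem_setOf_eq, Finset.mem_Icc] at hu hv
    have := rev_inj (show u - 1 < 2^m by omega) (show v - 1 < 2^m by omega) huv
    omega
lemma card_upper (m D : ℕ) (hD : 1 ≤ D) (hDm : 2*D + 2 ≤ 2^m) :
    ((Finset.Icc 1 (2^m+1) ×ˢ Finset.Icc 1 (2^m+1)).filter
      (fun p => p.1 ≠ p.2 ∧ nint (vdc p.1 - vdc p.2) ≤ (D:ℝ)/((2^m+1:ℕ):ℝ))).card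
      ≤ 2*(D-1)*2^m + 2*(2*D+1) := by
  classical
  have hP : 0 < 2^m := Nat.two_pow_pos m
  set ε := (D:ℝ)/((2^m+1:ℕ):ℝ) with hε
  have hNpos : (0:ℝ) < ((2^m+1:ℕ):ℝ) := by positivity
  have hPpos : (0:ℝ) < ((2:ℝ))^m := by positivity
  have hcast : ((2^m:ℕ):ℝ) = ((2:ℝ))^m := by push_cast; ring
  have hcastN : ((2^m+1:ℕ):ℝ) = ((2:ℝ))^m + 1 := by push_cast; ring
  have hDcast : ((D-1:ℕ):ℝ) = (D:ℝ) - 1 := by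
    push_cast [Nat.cast_sub hD]; ring
  have hlo : (((D-1:ℕ)):ℝ)/((2:ℝ))^m ≤ ε := by
    rw [hε, hDcast, div_le_div_iff₀ hPpos hNpos, hcastN]
    have hDle : (D:ℝ) ≤ ((2:ℝ))^m := by
      have : (D:ℝ) ≤ ((2*D+2:ℕ):ℝ) := by push_cast; linarith [Nat.cast_nonneg (α := ℝ) D]
      have h2 : ((2*D+2:ℕ):ℝ) ≤ ((2^m:ℕ):ℝ) := Nat.cast_le.2 hDm
      rw [hcast] at h2
      linarith
    nlinarith
  have hhi : ε < (((D-1:ℕ):ℝ) + 1)/((2:ℝ))^m := by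
    rw [hε, hDcast, div_lt_div_iff₀ hNpos hPpos, hcastN]
    have hD1 : (1:ℝ) ≤ (D:ℝ) := by exact_mod_cast hD
    nlinarith
  set cond : ℕ × ℕ → Prop := fun p => p.1 ≠ p.2 ∧ nint (vdc p.1 - vdc p.2) ≤ ε with hcond
  set SA := (Finset.Icc 1 (2^m) ×ˢ Finset.Icc 1 (2^m)).filter cond with hSA
  have hSAcard : SA.card = 2*(D-1)*2^m := count_grid m (D-1) ε (by omega) hlo hhi
  set U := (Finset.Icc 1 (2^m)).filter (fun l => nint (vdc (2^m+1) - vdc l) ≤ ε) with hU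
  have hUcard : U.card ≤ 2*D+1 := by
    apply card_U m D hD hDm
    rw [hε, div_lt_div_iff₀ hNpos (by positivity : (0:ℝ) < ((2:ℝ))^(m+1)), hcastN]
    have hD1 : (1:ℝ) ≤ (D:ℝ) := by exact_mod_cast hD
    have : ((2:ℝ))^(m+1) = 2*((2:ℝ))^m := by ring
    nlinarith
  have hsub : (Finset.Icc 1 (2^m+1) ×ˢ Finset.Icc 1 (2^m+1)).filter cond ⊆
      SA ∪ U.image (fun l => (2^m+1, l)) ∪ U.image (fun l => (l, 2^m+1)) := by
    intro p hp
    simp only [Finset.mem_filter, Finset.mem_product, Finset.mem_Icc] at hp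
    obtain ⟨⟨⟨h11, h12⟩, h21, h22⟩, hne, hc⟩ := hp
    simp only [Finset.mem_union, Finset.mem_image, hSA, hU, Finset.mem_filter,
      Finset.mem_product, Finset.mem_Icc]
    rcases eq_or_lt_of_le h12 with he1 | he1
    · -- p.1 = 2^m+1
      left; right
      refine ⟨p.2, ⟨⟨h21, by omega⟩, ?_⟩, ?_⟩
      · rw [he1] at hc
        exact hc
      · exact Prod.ext he1.symm rfl
    · rcases eq_or_lt_of_le h22 with he2 | he2
      · right
        refine ⟨p.1, ⟨⟨h11, by omega⟩, ?_⟩, ?_⟩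
        · rw [he2] at hc
          rw [nint_sub_comm]
          exact hc
        · exact Prod.ext rfl he2.symm
      · left; left
        exact ⟨⟨⟨h11, by omega⟩, h21, by omega⟩, hne, hc⟩
  calc ((Finset.Icc 1 (2^m+1) ×ˢ Finset.Icc 1 (2^m+1)).filter cond).card
      ≤ (SA ∪ U.image (fun l => (2^m+1, l)) ∪ U.image (fun l => (l, 2^m+1))).card :=
        Finset.card_le_card hsub
    _ ≤ (SA ∪ U.image (fun l => (2^m+1, l))).card + (U.image (fun l => (l, 2^m+1))).card :=
        Finset.card_union_le _ _
    _ ≤ SA.card + (U.image (fun l => (2^m+1, l))).card + (U.image (fun l => (l, 2^m+1))).card := by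
        have := Finset.card_union_le SA (U.image (fun l => (2^m+1, l)))
        omega
    _ ≤ SA.card + U.card + U.card := by
        have i1 := Finset.card_image_le (s := U) (f := fun l => ((2^m+1 : ℕ), l))
        have i2 := Finset.card_image_le (s := U) (f := fun l => (l, (2^m+1 : ℕ)))
        omega
    _ ≤ 2*(D-1)*2^m + 2*(2*D+1) := by omega
lemma F_pow (m : ℕ) {s : ℝ} (h0 : 0 ≤ s) (hD : 2*(⌊s⌋₊) < 2^m) :
    F (2^m) s = 2*((⌊s⌋₊:ℕ):ℝ) := by
  unfold F
  have hP : (0:ℝ) < ((2^m:ℕ):ℝ) := by positivity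
  have hcast : ((2^m:ℕ):ℝ) = (2:ℝ)^m := by push_cast; ring
  have hlo : ((⌊s⌋₊:ℕ):ℝ)/(2:ℝ)^m ≤ s/((2^m:ℕ):ℝ) := by
    rw [hcast]
    gcongr
    exact Nat.floor_le h0
  have hhi : s/((2^m:ℕ):ℝ) < (((⌊s⌋₊:ℕ):ℝ)+1)/(2:ℝ)^m := by
    rw [hcast, div_lt_div_iff₀ (by positivity) (by positivity)]
    exact mul_lt_mul_of_pos_right (Nat.lt_floor_add_one s) (by positivity)
  rw [count_grid m ⌊s⌋₊ _ hD hlo hhi]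
  push_cast
  field_simp

lemma limit_val {s : ℝ} (h0 : 0 ≤ s) {L : ℝ}
    (hL : Filter.Tendsto (fun N => F N s) Filter.atTop (nhds L)) : L = 2*((⌊s⌋₊:ℕ):ℝ) := by
  have hmono : Filter.Tendsto (fun m : ℕ => 2^m) Filter.atTop Filter.atTop :=
    Filter.tendsto_atTop_mono (fun m => (Nat.lt_two_pow_self (n := m)).le) Filter.tendsto_id
  have hcomp : Filter.Tendsto (fun m => F (2^m) s) Filter.atTop (nhds L) := hL.comp hmono
  have hev : (fun m => F (2^m) s) =ᶠ[Filter.atTop] (fun _ => 2*((⌊s⌋₊:ℕ):ℝ)) := by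
    filter_upwards [Filter.eventually_ge_atTop (2*⌊s⌋₊+1)] with m hm
    exact F_pow m h0 (lt_of_le_of_lt (by omega) (Nat.lt_two_pow_self (n := m)))
  exact tendsto_nhds_unique (hcomp.congr' hev) tendsto_const_nhds
set_option maxHeartbeats 2000000 in
lemma no_limit_frac {s : ℝ} (h05 : 1/2 < s) (hfrac : ((⌊s⌋₊:ℕ):ℝ) < s) :
    ¬ ∃ L, Filter.Tendsto (fun N => F N s) Filter.atTop (nhds L) := by
  rintro ⟨L, hL⟩
  have h0 : 0 ≤ s := by linarith
  set D := ⌊s⌋₊ with hDdef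
  set c₀ := max D 1 with hc₀def
  have hcD : D ≤ c₀ := le_max_left _ _
  have hc1 : 1 ≤ c₀ := le_max_right _ _
  have hLval : L = 2*((D:ℕ):ℝ) := limit_val h0 hL
  have h2c : 2*(c₀:ℝ) - 1 < 2*s := by
    rcases Nat.eq_zero_or_pos D with hD0 | hD0
    · have hco : c₀ = 1 := by omega
      rw [hco]
      push_cast
      linarith
    · have hco : c₀ = D := by omega
      rw [hco]
      have : ((D:ℕ):ℝ) < s := hfrac
      linarith
  have hδ1 : (0:ℝ) < (s - (D:ℝ))/((D:ℝ)+1) := div_pos (by linarith [hfrac]) (by positivity)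
  have hδ2 : (0:ℝ) < (2*s - (2*(c₀:ℝ) - 1))/(2*(c₀:ℝ)) := by
    apply div_pos (by linarith) (by positivity)
  set δ := min ((s - (D:ℝ))/((D:ℝ)+1)) ((2*s - (2*(c₀:ℝ) - 1))/(2*(c₀:ℝ))) with hδdef
  have hδ : 0 < δ := lt_min hδ1 hδ2
  obtain ⟨c, hc⟩ := exists_pow_lt_of_lt_one hδ (by norm_num : (1/2:ℝ) < 1)
  have hcinv : ((2:ℝ)^c)⁻¹ < δ := by
    have hh : ((1:ℝ)/2)^c = ((2:ℝ)^c)⁻¹ := by rw [div_pow, one_pow, one_div]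
    rw [← hh]
    exact hc
  have hcpos : (0:ℝ) < (2:ℝ)^c := by positivity
  set K := ⌈2*s⌉₊ + 2*c₀ + 2 with hK
  have hlow : ∀ᶠ m in Filter.atTop, ((2*D*2^c + 4*c₀ : ℕ):ℝ)/((2^c + 1 : ℕ):ℝ)
      ≤ F (2^m + 2^(m-c)) s := by
    filter_upwards [Filter.eventually_ge_atTop (max c K)] with m hm
    have hmc : c ≤ m := le_trans (le_max_left _ _) hm
    have hmK : K ≤ m := le_trans (le_max_right _ _) hm
    have hPm : K < 2^m := lt_of_le_of_lt hmK (Nat.lt_two_pow_self (n := m))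
    have hMP : 2^(m-c) ≤ 2^m := Nat.pow_le_pow_right (by norm_num) (by omega)
    have hM1 : 1 ≤ 2^(m-c) := Nat.one_le_two_pow
    have hMc : 2^(m-c) * 2^c = 2^m := by
      rw [← pow_add]
      congr 1
      omega
    have hNpos : 0 < 2^m + 2^(m-c) := by omega
    have hNR : (0:ℝ) < ((2^m + 2^(m-c) : ℕ):ℝ) := by positivity
    have hPR : (0:ℝ) < ((2^m:ℕ):ℝ) := by positivity
    have hPcast : ((2^m:ℕ):ℝ) = (2:ℝ)^m := by push_cast; ring
    have hMcR : ((2^(m-c):ℕ):ℝ) * (2:ℝ)^c = ((2^m:ℕ):ℝ) := by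
      have hcc := congrArg (Nat.cast : ℕ → ℝ) hMc
      push_cast at hcc ⊢
      rw [← hcc]
    have hMR : ((2^(m-c):ℕ):ℝ) = ((2^m:ℕ):ℝ) * ((2:ℝ)^c)⁻¹ := by
      field_simp [← hMcR]
      exact hMcR
    set ε := s/((2^m + 2^(m-c) : ℕ):ℝ) with hε
    have hD2s : 2*(D:ℝ) ≤ 2*s := by linarith [hfrac]
    have hDK : 2*D < K := by
      have h1 : ((2*D:ℕ):ℝ) ≤ ((⌈2*s⌉₊:ℕ):ℝ) := by
        push_cast
        calc 2*((D:ℕ):ℝ) ≤ 2*s := hD2s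
          _ ≤ ((⌈2*s⌉₊:ℕ):ℝ) := Nat.le_ceil _
      have h2 : 2*D ≤ ⌈2*s⌉₊ := by exact_mod_cast h1
      omega
    set DA := ⌊s*((2^m:ℕ):ℝ)/((2^m + 2^(m-c) : ℕ):ℝ)⌋₊ with hDA
    have hx0 : 0 ≤ s*((2^m:ℕ):ℝ)/((2^m + 2^(m-c) : ℕ):ℝ) := by positivity
    have hfl : ((DA:ℕ):ℝ) ≤ s*((2^m:ℕ):ℝ)/((2^m + 2^(m-c) : ℕ):ℝ) := Nat.floor_le hx0
    have hfl2 : s*((2^m:ℕ):ℝ)/((2^m + 2^(m-c) : ℕ):ℝ) < ((DA:ℕ):ℝ) + 1 := Nat.lt_floor_add_one _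
    have hxle : s*((2^m:ℕ):ℝ)/((2^m + 2^(m-c) : ℕ):ℝ) ≤ s := by
      rw [div_le_iff₀ hNR]
      have hPN : ((2^m:ℕ):ℝ) ≤ ((2^m + 2^(m-c) : ℕ):ℝ) := by
        exact_mod_cast (by omega : 2^m ≤ 2^m + 2^(m-c))
      nlinarith
    have hDAle : DA ≤ D := Nat.floor_mono hxle
    have hDAP : 2*DA < 2^m := by omega
    have heq1 : (s*((2^m:ℕ):ℝ)/((2^m + 2^(m-c) : ℕ):ℝ))/((2^m:ℕ):ℝ) = ε := by
      rw [hε, div_div, mul_comm ((2^m + 2^(m-c) : ℕ):ℝ) ((2^m:ℕ):ℝ), mul_comm s ((2^m:ℕ):ℝ),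
        mul_div_mul_left _ _ (ne_of_gt hPR)]
    have f1 : ((DA:ℕ):ℝ)/(2:ℝ)^m ≤ ε := by
      rw [← hPcast, ← heq1]
      gcongr
    have f2 : ε < (((DA:ℕ):ℝ)+1)/(2:ℝ)^m := by
      rw [← hPcast, ← heq1, div_lt_div_iff₀ hPR hPR]
      exact mul_lt_mul_of_pos_right hfl2 hPR
    have f4 : D ≤ DA := by
      apply Nat.le_floor
      rw [le_div_iff₀ hNR]
      have hNcast : ((2^m + 2^(m-c) : ℕ):ℝ) = ((2^m:ℕ):ℝ) + ((2^(m-c):ℕ):ℝ) := by push_cast; ring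
      rw [hNcast, hMR]
      have hδle : δ ≤ (s - (D:ℝ))/((D:ℝ)+1) := min_le_left _ _
      have hkey : ((D:ℕ):ℝ) * ((2:ℝ)^c)⁻¹ ≤ s - ((D:ℕ):ℝ) := by
        have h1 : ((D:ℕ):ℝ) * ((2:ℝ)^c)⁻¹ ≤ ((D:ℕ):ℝ) * δ :=
          mul_le_mul_of_nonneg_left (le_of_lt hcinv) (Nat.cast_nonneg _)
        have h2 : ((D:ℕ):ℝ) * δ ≤ ((D:ℕ):ℝ) * ((s - (D:ℝ))/((D:ℝ)+1)) :=
          mul_le_mul_of_nonneg_left hδle (Nat.cast_nonneg _)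
        have h3 : ((D:ℕ):ℝ) * ((s - (D:ℝ))/((D:ℝ)+1)) ≤ s - (D:ℝ) := by
          rw [mul_comm, div_mul_eq_mul_div, div_le_iff₀ (by positivity : (0:ℝ) < (D:ℝ)+1)]
          nlinarith [hfrac, Nat.cast_nonneg (α := ℝ) D]
        linarith
      have hexp := mul_le_mul_of_nonneg_left hkey hPR.le
      nlinarith [hexp]
    have f5 : ((2*c₀ - 1 : ℕ):ℝ)/((2:ℝ)^(m+1)) ≤ ε := by
      have hA : ((2*c₀-1:ℕ):ℝ) = 2*(c₀:ℝ) - 1 := by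
        push_cast [Nat.cast_sub (show 1 ≤ 2*c₀ by omega)]
        ring
      rw [hε, div_le_div_iff₀ (by positivity) hNR]
      have hNcast : ((2^m + 2^(m-c) : ℕ):ℝ) = ((2^m:ℕ):ℝ)*(1 + ((2:ℝ)^c)⁻¹) := by
        push_cast
        rw [show ((2:ℝ))^(m-c) = ((2^(m-c):ℕ):ℝ) from by push_cast; ring, hMR]
        push_cast
        ring
      have h2m1 : ((2:ℝ))^(m+1) = 2*((2^m:ℕ):ℝ) := by rw [hPcast]; ring
      rw [hA, hNcast, h2m1]
      have hδle2 : δ ≤ (2*s - (2*(c₀:ℝ) - 1))/(2*(c₀:ℝ)) := min_le_right _ _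
      have hc₀R : (1:ℝ) ≤ (c₀:ℝ) := by exact_mod_cast hc1
      have hinv0 : (0:ℝ) ≤ ((2:ℝ)^c)⁻¹ := by positivity
      have hkey : (2*(c₀:ℝ)-1) * ((2:ℝ)^c)⁻¹ < 2*s - (2*(c₀:ℝ)-1) := by
        have e1 : (2*(c₀:ℝ)-1) * ((2:ℝ)^c)⁻¹ ≤ 2*(c₀:ℝ) * ((2:ℝ)^c)⁻¹ :=
          mul_le_mul_of_nonneg_right (by linarith) hinv0
        have e2 : 2*(c₀:ℝ) * ((2:ℝ)^c)⁻¹ < 2*(c₀:ℝ) * δ :=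
          mul_lt_mul_of_pos_left hcinv (by linarith)
        have e3 : 2*(c₀:ℝ) * δ ≤ 2*(c₀:ℝ) * ((2*s - (2*(c₀:ℝ) - 1))/(2*(c₀:ℝ))) :=
          mul_le_mul_of_nonneg_left hδle2 (by linarith)
        have e4 : 2*(c₀:ℝ) * ((2*s - (2*(c₀:ℝ) - 1))/(2*(c₀:ℝ))) = 2*s - (2*(c₀:ℝ) - 1) := by
          field_simp
        linarith
      have hexp := mul_le_mul_of_nonneg_left (le_of_lt hkey) hPR.le
      nlinarith [hexp]
    have f6 : 2*c₀ ≤ 2^m := by omega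
    have hcl := card_lower m (2^(m-c)) c₀ DA ε hMP hc1 f6 f5 hDAP f1 f2
    have hnum : 2^(m-c)*(2*D*2^c + 4*c₀) = 2*D*2^m + 2*(2^(m-c)*(2*c₀)) := by
      rw [Nat.mul_add]
      have e1 : 2^(m-c)*(2*D*2^c) = 2*D*2^m := by
        rw [← hMc]
        ring
      have e2 : 2^(m-c)*(4*c₀) = 2*(2^(m-c)*(2*c₀)) := by ring
      rw [e1, e2]
    have hden : 2^(m-c)*(2^c + 1) = 2^m + 2^(m-c) := by
      rw [Nat.mul_add, hMc, Nat.mul_one]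
    have hmono : 2^(m-c)*(2*D*2^c + 4*c₀) ≤
        ((Finset.Icc 1 (2^m+2^(m-c)) ×ˢ Finset.Icc 1 (2^m+2^(m-c))).filter
          (fun p => p.1 ≠ p.2 ∧ nint (vdc p.1 - vdc p.2) ≤ ε)).card := by
      rw [hnum]
      have hle : 2*D*2^m ≤ 2*DA*2^m := by
        apply Nat.mul_le_mul_right
        omega
      omega
    have hFform : F (2^m + 2^(m-c)) s
        = (((Finset.Icc 1 (2^m+2^(m-c)) ×ˢ Finset.Icc 1 (2^m+2^(m-c))).filter
          (fun p => p.1 ≠ p.2 ∧ nint (vdc p.1 - vdc p.2) ≤ ε)).card : ℝ)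
          / ((2^m + 2^(m-c) : ℕ):ℝ) := by
      unfold F
      norm_cast
    rw [hFform]
    have hstep : ((2^(m-c)*(2*D*2^c + 4*c₀) : ℕ):ℝ) / ((2^m + 2^(m-c) : ℕ):ℝ)
        ≤ (((Finset.Icc 1 (2^m+2^(m-c)) ×ˢ Finset.Icc 1 (2^m+2^(m-c))).filter
          (fun p => p.1 ≠ p.2 ∧ nint (vdc p.1 - vdc p.2) ≤ ε)).card : ℝ)
          / ((2^m + 2^(m-c) : ℕ):ℝ) := by
      gcongr
    refine le_trans (le_of_eq ?_) hstep
    rw [← hden]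
    push_cast
    rw [mul_comm ((2:ℝ)^(m-c)) _, mul_comm ((2:ℝ)^(m-c)) _, mul_div_mul_right]
    positivity
  have hNt : Filter.Tendsto (fun m : ℕ => 2^m + 2^(m-c)) Filter.atTop Filter.atTop := by
    apply Filter.tendsto_atTop_mono (fun m => ?_) Filter.tendsto_id
    simp only [id_eq]
    exact le_trans (Nat.lt_two_pow_self (n := m)).le (Nat.le_add_right _ _)
  have hsubs : Filter.Tendsto (fun m => F (2^m + 2^(m-c)) s) Filter.atTop (nhds L) :=
    hL.comp hNt
  have hge : ((2*D*2^c + 4*c₀ : ℕ):ℝ)/((2^c + 1 : ℕ):ℝ) ≤ L := ge_of_tendsto hsubs hlow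
  have hgt : 2*((D:ℕ):ℝ) < ((2*D*2^c + 4*c₀ : ℕ):ℝ)/((2^c + 1 : ℕ):ℝ) := by
    rw [lt_div_iff₀ (by positivity : (0:ℝ) < ((2^c + 1 : ℕ):ℝ))]
    have hDc : D < 2*c₀ := by omega
    have hDcR : ((D:ℕ):ℝ) < 2*(c₀:ℝ) := by exact_mod_cast hDc
    push_cast
    nlinarith [hcpos]
  rw [hLval] at hge
  linarith
lemma no_limit_int {s : ℝ} (h05 : 1/2 < s) (hint : ((⌊s⌋₊:ℕ):ℝ) = s) :
    ¬ ∃ L, Filter.Tendsto (fun N => F N s) Filter.atTop (nhds L) := by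
  rintro ⟨L, hL⟩
  have h0 : 0 ≤ s := by linarith
  set D := ⌊s⌋₊ with hDdef
  have hD1 : 1 ≤ D := by
    by_contra hcon
    push_neg at hcon
    interval_cases D
    · rw [← hint] at h05
      norm_num at h05
  have hLval : L = 2*((D:ℕ):ℝ) := limit_val h0 hL
  have hupper : ∀ᶠ m in Filter.atTop, F (2^m+1) s ≤ 2*((D:ℕ):ℝ) - 1 := by
    filter_upwards [Filter.eventually_ge_atTop (2*D+3)] with m hm
    have h2m : 2*D+3 ≤ 2^m := le_trans hm (Nat.lt_two_pow_self (n := m)).le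
    have hcu := card_upper m D hD1 (by omega)
    rw [← hint]
    have hFeq : F (2^m+1) ((D:ℕ):ℝ)
        = (((Finset.Icc 1 (2^m+1) ×ˢ Finset.Icc 1 (2^m+1)).filter
          (fun p => p.1 ≠ p.2 ∧ nint (vdc p.1 - vdc p.2) ≤ ((D:ℕ):ℝ)/((2^m+1:ℕ):ℝ))).card : ℝ)
          / ((2^m+1:ℕ):ℝ) := by
      unfold F
      norm_cast
    rw [hFeq]
    have hNpos : (0:ℝ) < ((2^m+1:ℕ):ℝ) := by positivity
    have hstep : (((Finset.Icc 1 (2^m+1) ×ˢ Finset.Icc 1 (2^m+1)).filter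
          (fun p => p.1 ≠ p.2 ∧ nint (vdc p.1 - vdc p.2) ≤ ((D:ℕ):ℝ)/((2^m+1:ℕ):ℝ))).card : ℝ)
        ≤ ((2*(D-1)*2^m + 2*(2*D+1) : ℕ):ℝ) := by exact_mod_cast hcu
    rw [div_le_iff₀ hNpos]
    refine le_trans hstep ?_
    have hcast : ((2^m:ℕ):ℝ) = (2:ℝ)^m := by push_cast; ring
    have h2mR : (2*(D:ℝ)+3) ≤ (2:ℝ)^m := by
      rw [← hcast]
      exact_mod_cast h2m
    push_cast [Nat.cast_sub hD1]
    nlinarith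
  have hNt : Filter.Tendsto (fun m : ℕ => 2^m + 1) Filter.atTop Filter.atTop := by
    apply Filter.tendsto_atTop_mono (fun m => ?_) Filter.tendsto_id
    simp only [id_eq]
    exact le_trans (Nat.lt_two_pow_self (n := m)).le (Nat.le_add_right _ _)
  have hsubs : Filter.Tendsto (fun m => F (2^m + 1) s) Filter.atTop (nhds L) := hL.comp hNt
  have hle : L ≤ 2*((D:ℕ):ℝ) - 1 := le_of_tendsto hsubs hupper
  rw [hLval] at hle
  linarith

theorem stmt10 :
    (∀ s : ℝ, 0 ≤ s →
      ((∃ L : ℝ, Filter.Tendsto (fun N => F N s) Filter.atTop (nhds L)) ↔ s ≤ 1 / 2)) ∧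
    (∀ s : ℝ, 0 ≤ s → s ≤ 1 / 2 →
      Filter.Tendsto (fun N => F N s) Filter.atTop (nhds 0)) ∧
    ¬ (∀ s : ℝ, 0 ≤ s →
      Filter.Tendsto (fun N => F N s) Filter.atTop (nhds (2 * s))) := by
  have part2 : ∀ s : ℝ, 0 ≤ s → s ≤ 1 / 2 →
      Filter.Tendsto (fun N => F N s) Filter.atTop (nhds 0) := by
    intro s h0 h
    have heq : (fun N => F N s) = (fun _ => (0:ℝ)) := funext fun N => F_zero N h0 h
    rw [heq]
    exact tendsto_const_nhds
  refine ⟨?_, part2, ?_⟩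
  · intro s h0
    constructor
    · rintro ⟨L, hL⟩
      by_contra hgt
      push_neg at hgt
      rcases eq_or_lt_of_le (Nat.floor_le h0) with he | hlt
      · exact no_limit_int hgt he ⟨L, hL⟩
      · exact no_limit_frac hgt hlt ⟨L, hL⟩
    · intro hs
      exact ⟨0, part2 s h0 hs⟩
  · intro hall
    have h1 := hall (1/2) (by norm_num)
    have h2 := part2 (1/2) (by norm_num) (le_refl _)
    have := tendsto_nhds_unique h1 h2
    norm_num at this
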